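/- Suppose A, B > 0, M ∈ ℕ, and t_1, …, t_M ∈ [0,1] satisfy the two-sided discretization bounds A·‖x‖_{L_1[0,1]} ≤ (1/M)·∑_{j=1}^M |x(t_j)| ≤ B·‖x‖_{L_1[0,1]} for all x ∈ X^N. Then M ≥ nN/((1+ε)B). In particular, the L_1 norm on X^N cannot be discretized with uniform constants using a number of sampling points proportional to the dimension N. -/

import Mathlib

open MeasureTheory Set Finset

/-- The interval `I_k(i)` of width `1/(m*N)`, the `i`-th subinterval (1-based)
of `[(k-1)/N, k/N)`. -/
noncomputable def Ik (m N k i : ℕ) : Set ℝ :=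
  Set.Ico (((k : ℝ) - 1) / N + ((i : ℝ) - 1) / (m * N))
    (((k : ℝ) - 1) / N + (i : ℝ) / (m * N))

/-- The functions `x_j` of the construction: for `1 ≤ j ≤ n`,
`x_j = N·𝟙_{[(j-1)/N, j/N)}`, and for `n < j ≤ N`,
`x_j = N·∑_{k=1}^n 𝟙_{I_k(i_{k,j})} + N·𝟙_{[(j-1)/N, j/N)}`, where the indices
`i_{k,j}` are encoded (0-based) by the map `idx`. -/
noncomputable def xfun (n m N : ℕ) (idx : ℕ → Fin n → Fin m) (j : ℕ) : ℝ → ℝ :=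
  fun t =>
    if j ≤ n then
      (N : ℝ) * Set.indicator (Set.Ico (((j : ℝ) - 1) / N) ((j : ℝ) / N)) (fun _ => (1 : ℝ)) t
    else
      (N : ℝ) * ∑ k : Fin n,
          Set.indicator (Ik m N ((k : ℕ) + 1) ((idx j k : ℕ) + 1)) (fun _ => (1 : ℝ)) t
        + (N : ℝ) * Set.indicator (Set.Ico (((j : ℝ) - 1) / N) ((j : ℝ) / N)) (fun _ => (1 : ℝ)) t

lemma indInteg (a b : ℝ) :
    Integrable ((Set.Ico a b).indicator (fun _ => (1:ℝ)))
      (volume.restrict (Set.Ico (0:ℝ) 1)) := by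
  have : Integrable ((Set.Ico a b).indicator (fun _ => (1:ℝ))) := by
    rw [integrable_indicator_iff measurableSet_Ico]
    refine integrableOn_const ?_
    simp [Real.volume_Ico]
  exact this.restrict

lemma indInt (a b : ℝ) (hab : a ≤ b) (h0 : 0 ≤ a) (h1 : b ≤ 1) :
    ∫ s in Set.Ico (0:ℝ) 1, (Set.Ico a b).indicator (fun _ => (1:ℝ)) s = b - a := by
  rw [setIntegral_indicator measurableSet_Ico,
    Set.inter_eq_self_of_subset_right (Set.Ico_subset_Ico h0 h1)]
  simp [Real.volume_Ico, ENNReal.toReal_ofReal (sub_nonneg.mpr hab), hab]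

lemma IkInteg (m N k i : ℕ) :
    Integrable ((Ik m N k i).indicator (fun _ => (1:ℝ)))
      (volume.restrict (Set.Ico (0:ℝ) 1)) :=
  indInteg _ _

lemma Ik_eq (m N k i : ℕ) :
    Ik m N (k+1) (i+1) = Set.Ico ((k:ℝ)/N + (i:ℝ)/((m:ℝ)*N))
      ((k:ℝ)/N + ((i:ℝ)+1)/((m:ℝ)*N)) := by
  have e1 : (((k+1:ℕ):ℝ) - 1)/N + ((((i+1:ℕ)):ℝ)-1)/((m:ℕ)*(N:ℕ):ℝ)
      = (k:ℝ)/N + (i:ℝ)/((m:ℝ)*N) := by push_cast; ring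
  have e2 : (((k+1:ℕ):ℝ) - 1)/N + (((i+1:ℕ)):ℝ)/((m:ℕ)*(N:ℕ):ℝ)
      = (k:ℝ)/N + ((i:ℝ)+1)/((m:ℝ)*N) := by push_cast; ring
  simp only [Ik]
  rw [show ((m:ℕ):ℝ) * ((N:ℕ):ℝ) = ((m:ℝ)*N) from rfl] at *
  congr 1 <;> push_cast <;> ring

lemma IkInt (m N : ℕ) (hm : 0 < m) (hN : 0 < N) (k i : ℕ) (hk : k + 1 ≤ N) (hi : i < m) :
    ∫ s in Set.Ico (0:ℝ) 1, (Ik m N (k+1) (i+1)).indicator (fun _ => (1:ℝ)) s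
      = 1/((m:ℝ)*N) := by
  have hNr : (0:ℝ) < N := by exact_mod_cast hN
  have hmr : (0:ℝ) < m := by exact_mod_cast hm
  have hmN : (0:ℝ) < (m:ℝ)*N := mul_pos hmr hNr
  have hkr : (k:ℝ) + 1 ≤ N := by exact_mod_cast hk
  have hir : (i:ℝ) + 1 ≤ m := by exact_mod_cast hi
  rw [Ik_eq]
  rw [indInt _ _ ?hab ?h0 ?h1]
  · ring
  case hab =>
    have : (i:ℝ)/((m:ℝ)*N) ≤ ((i:ℝ)+1)/((m:ℝ)*N) := by
      rw [div_le_div_iff₀ hmN hmN]; nlinarith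
    linarith
  case h0 => positivity
  case h1 =>
    rw [div_add_div _ _ hNr.ne' hmN.ne', div_le_one (by positivity)]
    nlinarith [Nat.cast_nonneg (α := ℝ) k, Nat.cast_nonneg (α := ℝ) i]

lemma subint (m N : ℕ) (hm : 0 < m) (hN : 0 < N) (k : ℕ) (tt : ℝ)
    (htt : tt ∈ Set.Ico ((k:ℝ)/N) (((k:ℝ)+1)/N)) :
    ∃ i : Fin m, tt ∈ Ik m N (k+1) ((i:ℕ)+1) := by
  have hNr : (0:ℝ) < N := by exact_mod_cast hN
  have hmr : (0:ℝ) < m := by exact_mod_cast hm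
  have hmN : (0:ℝ) < (m:ℝ)*N := mul_pos hmr hNr
  set u := tt - (k:ℝ)/N with hu
  have hu0 : 0 ≤ u := by simp only [hu]; linarith [htt.1]
  have hu1 : u * ((m:ℝ)*N) < m := by
    have h2 : u < 1/N := by
      have h3 : tt - (k:ℝ)/N < ((k:ℝ)+1)/N - (k:ℝ)/N := by linarith [htt.2]
      calc u < ((k:ℝ)+1)/N - (k:ℝ)/N := h3
        _ = 1/N := by ring
    calc u * ((m:ℝ)*N) < (1/N) * ((m:ℝ)*N) := mul_lt_mul_of_pos_right h2 hmN
      _ = m := by field_simp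
  set z := ⌊u * ((m:ℝ)*N)⌋ with hz
  have hz0 : 0 ≤ z := Int.floor_nonneg.mpr (mul_nonneg hu0 hmN.le)
  have hzm : z < m := Int.floor_lt.mpr (by exact_mod_cast hu1)
  refine ⟨⟨z.toNat, by omega⟩, ?_⟩
  have hcast : ((z.toNat : ℕ) : ℝ) = (z : ℝ) := by
    exact_mod_cast Int.toNat_of_nonneg hz0
  have h1 : (z:ℝ) ≤ u * ((m:ℝ)*N) := Int.floor_le _
  have h2 : u * ((m:ℝ)*N) < (z:ℝ) + 1 := Int.lt_floor_add_one _
  simp only [Ik, Set.mem_Ico]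
  push_cast [hcast]
  constructor
  · have hd : (z:ℝ) / ((m:ℝ)*N) ≤ u := by
      rw [div_le_iff₀ hmN]; exact h1
    have hk : ((k:ℝ)+1-1)/N + ((z:ℝ)+1-1)/((m:ℝ)*N) = (k:ℝ)/N + (z:ℝ)/((m:ℝ)*N) := by
      ring
    rw [hk]
    linarith [htt.1]
  · have hd : u < ((z:ℝ)+1) / ((m:ℝ)*N) := by
      rw [lt_div_iff₀ hmN]; exact h2
    have hk : ((k:ℝ)+1-1)/N + ((z:ℝ)+1)/((m:ℝ)*N) = (k:ℝ)/N + ((z:ℝ)+1)/((m:ℝ)*N) := by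
      ring
    rw [hk]
    linarith [htt.1]

set_option maxHeartbeats 1000000 in
theorem stmt5 (n m N : ℕ) (ε : ℝ) (hn : 0 < n) (hε : 0 < ε) (hε1 : ε < 1)
    (hm : (m : ℝ) = n / ε) (hN : N = n + m ^ n)
    (idx : ℕ → Fin n → Fin m) (hidx : Set.BijOn idx (Set.Ioc n N) Set.univ)
    (A B : ℝ) (hA : 0 < A) (hB : 0 < B) (M : ℕ) (t : Fin M → ℝ)
    (ht : ∀ j, t j ∈ Set.Icc (0 : ℝ) 1)
    (hdisc : ∀ x ∈ Submodule.span ℝ (xfun n m N idx '' Set.Icc 1 N),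
      A * ∫ s in Set.Ico (0 : ℝ) 1, |x s| ≤ (1 / M : ℝ) * ∑ j, |x (t j)| ∧
        (1 / M : ℝ) * ∑ j, |x (t j)| ≤ B * ∫ s in Set.Ico (0 : ℝ) 1, |x s|) :
    (n * N : ℝ) / ((1 + ε) * B) ≤ M := by
  -- positivity facts
  have hm1 : 0 < m := by
    have h : (0:ℝ) < m := by
      rw [hm]; exact div_pos (by exact_mod_cast hn) hε
    exact_mod_cast h
  have hnN : n ≤ N := hN ▸ Nat.le_add_right n _
  have hN0 : 0 < N := lt_of_lt_of_le hn hnN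
  have hNr : (0:ℝ) < N := by exact_mod_cast hN0
  have hmr : (0:ℝ) < m := by exact_mod_cast hm1
  have hmN : (0:ℝ) < (m:ℝ)*N := mul_pos hmr hNr
  have hmε : (m:ℝ) * ε = n := by rw [hm]; field_simp
  -- value of x_{k+1} for k < n
  have hval1 : ∀ k : ℕ, k < n → ∀ s, xfun n m N idx (k+1) s
      = (N:ℝ) * (Set.Ico ((k:ℝ)/N) (((k:ℝ)+1)/N)).indicator (fun _ => (1:ℝ)) s := by
    intro k hk s
    simp only [xfun, if_pos (show k+1 ≤ n from hk)]
    congr 2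
    push_cast
    congr 1 <;> ring
  -- integral of x_{k+1} for k < n
  have hint1 : ∀ k : ℕ, k < n → ∫ s in Set.Ico (0:ℝ) 1, |xfun n m N idx (k+1) s| = 1 := by
    intro k hk
    have habs : (fun s => |xfun n m N idx (k+1) s|)
        = fun s => (N:ℝ) * (Set.Ico ((k:ℝ)/N) (((k:ℝ)+1)/N)).indicator (fun _ => (1:ℝ)) s := by
      funext s
      rw [hval1 k hk s]
      exact abs_of_nonneg (mul_nonneg (Nat.cast_nonneg N)
        (Set.indicator_nonneg (fun _ _ => zero_le_one) s))
    rw [habs, integral_const_mul]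
    have hab : (k:ℝ)/N ≤ ((k:ℝ)+1)/N := by
      rw [div_le_div_iff₀ hNr hNr]; nlinarith [Nat.cast_nonneg (α := ℝ) k]
    have h0 : (0:ℝ) ≤ (k:ℝ)/N := by positivity
    have h1 : ((k:ℝ)+1)/N ≤ 1 := by
      rw [div_le_one hNr]
      have : (k:ℝ) + 1 ≤ n := by exact_mod_cast hk
      have hnr : (n:ℝ) ≤ N := by exact_mod_cast hnN
      linarith
    rw [indInt _ _ hab h0 h1]
    field_simp
    ring
  -- every block [k/N,(k+1)/N) contains a sample point
  have hblock : ∀ k : Fin n, ∃ j : Fin M, t j ∈ Set.Ico (((k:ℕ):ℝ)/N) ((((k:ℕ):ℝ)+1)/N) := by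
    intro k
    by_contra hcon
    push_neg at hcon
    have hmem : xfun n m N idx ((k:ℕ)+1) ∈ Submodule.span ℝ (xfun n m N idx '' Set.Icc 1 N) :=
      Submodule.subset_span ⟨(k:ℕ)+1, ⟨by omega, by have := k.isLt; omega⟩, rfl⟩
    have h := (hdisc _ hmem).1
    rw [hint1 k k.isLt] at h
    have hz : ∀ j : Fin M, |xfun n m N idx ((k:ℕ)+1) (t j)| = 0 := by
      intro j
      rw [hval1 k k.isLt]
      rw [Set.indicator_of_notMem (hcon j)]
      simp
    rw [Finset.sum_congr rfl (fun j _ => hz j)] at h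
    simp at h
    linarith
  choose σ hσ using hblock
  have hsubi : ∀ k : Fin n, ∃ i : Fin m, t (σ k) ∈ Ik m N ((k:ℕ)+1) ((i:ℕ)+1) :=
    fun k => subint m N hm1 hN0 k (t (σ k)) (hσ k)
  choose ι hι using hsubi
  obtain ⟨j0, hj0mem, hj0eq⟩ := hidx.surjOn (Set.mem_univ ι)
  have hnotle : ¬ j0 ≤ n := not_le.mpr hj0mem.1
  have hj0N : j0 ≤ N := hj0mem.2
  -- nonnegativity of x_{j0}
  have hx0 : ∀ s, 0 ≤ xfun n m N idx j0 s := by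
    intro s
    simp only [xfun, if_neg hnotle]
    have h1 : (0:ℝ) ≤ ∑ k : Fin n,
        (Ik m N ((k:ℕ)+1) ((idx j0 k : ℕ)+1)).indicator (fun _ => (1:ℝ)) s :=
      Finset.sum_nonneg (fun k _ => Set.indicator_nonneg (fun _ _ => zero_le_one) s)
    have h2 : (0:ℝ) ≤ (Set.Ico (((j0:ℝ)-1)/N) ((j0:ℝ)/N)).indicator (fun _ => (1:ℝ)) s :=
      Set.indicator_nonneg (fun _ _ => zero_le_one) s
    have hNn0 : (0:ℝ) ≤ (N:ℝ) := Nat.cast_nonneg N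
    exact add_nonneg (mul_nonneg hNn0 h1) (mul_nonneg hNn0 h2)
  -- integral of x_{j0}
  have hint2 : ∫ s in Set.Ico (0:ℝ) 1, |xfun n m N idx j0 s| = 1 + ε := by
    have habs : (fun s => |xfun n m N idx j0 s|) = fun s =>
        (N:ℝ) * ∑ k : Fin n,
            (Ik m N ((k:ℕ)+1) ((idx j0 k : ℕ)+1)).indicator (fun _ => (1:ℝ)) s
          + (N:ℝ) * (Set.Ico (((j0:ℝ)-1)/N) ((j0:ℝ)/N)).indicator (fun _ => (1:ℝ)) s := by
      funext s
      rw [abs_of_nonneg (hx0 s)]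
      simp only [xfun, if_neg hnotle]
    rw [habs]
    have hf1 : Integrable (fun s => (N:ℝ) * ∑ k : Fin n,
        (Ik m N ((k:ℕ)+1) ((idx j0 k : ℕ)+1)).indicator (fun _ => (1:ℝ)) s)
        (volume.restrict (Set.Ico (0:ℝ) 1)) :=
      (integrable_finset_sum _ (fun k _ => IkInteg m N _ _)).const_mul _
    have hf2 : Integrable (fun s =>
        (N:ℝ) * (Set.Ico (((j0:ℝ)-1)/N) ((j0:ℝ)/N)).indicator (fun _ => (1:ℝ)) s)
        (volume.restrict (Set.Ico (0:ℝ) 1)) :=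
      (indInteg _ _).const_mul _
    rw [integral_add hf1 hf2, integral_const_mul, integral_const_mul]
    rw [integral_finset_sum _ (fun k _ => IkInteg m N _ _)]
    have hIkI : ∀ k : Fin n, ∫ s in Set.Ico (0:ℝ) 1,
        (Ik m N ((k:ℕ)+1) ((idx j0 k : ℕ)+1)).indicator (fun _ => (1:ℝ)) s = 1/((m:ℝ)*N) := by
      intro k
      exact IkInt m N hm1 hN0 k (idx j0 k) (by have := k.isLt; omega) (Fin.is_lt _)
    rw [Finset.sum_congr rfl (fun k _ => hIkI k)]
    rw [Finset.sum_const, Finset.card_univ, Fintype.card_fin]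
    have hj01 : (1:ℝ) ≤ (j0:ℝ) := by
      have : 1 ≤ j0 := by omega
      exact_mod_cast this
    have hj0Nr : (j0:ℝ) ≤ N := by exact_mod_cast hj0N
    have hab : ((j0:ℝ)-1)/N ≤ (j0:ℝ)/N := by
      rw [div_le_div_iff₀ hNr hNr]; nlinarith
    have h0 : (0:ℝ) ≤ ((j0:ℝ)-1)/N := by
      apply div_nonneg _ hNr.le; linarith
    have h1 : (j0:ℝ)/N ≤ 1 := by rw [div_le_one hNr]; exact hj0Nr
    rw [indInt _ _ hab h0 h1]
    have e1 : (N:ℝ) * ((n:ℕ) • (1/((m:ℝ)*N))) = ε := by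
      rw [nsmul_eq_mul]
      have : ε * ((m:ℝ) * N) = (n:ℝ) * N := by
        rw [show ε * ((m:ℝ)*N) = ((m:ℝ)*ε)*N from by ring, hmε]
      field_simp
      linarith [this]
    have e2 : (N:ℝ) * ((j0:ℝ)/N - ((j0:ℝ)-1)/N) = 1 := by
      field_simp
      ring
    rw [e1, e2]
    ring
  -- membership of x_{j0} in the span
  have hmem2 : xfun n m N idx j0 ∈ Submodule.span ℝ (xfun n m N idx '' Set.Icc 1 N) :=
    Submodule.subset_span ⟨j0, ⟨by omega, hj0N⟩, rfl⟩
  have hup := (hdisc _ hmem2).2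
  rw [hint2] at hup
  -- lower bound for the sampled values
  have hNle : ∀ k : Fin n, (N:ℝ) ≤ |xfun n m N idx j0 (t (σ k))| := by
    intro k
    rw [abs_of_nonneg (hx0 _)]
    simp only [xfun, if_neg hnotle]
    have h1 : (Ik m N ((k:ℕ)+1) ((idx j0 k : ℕ)+1)).indicator (fun _ => (1:ℝ)) (t (σ k)) = 1 := by
      rw [hj0eq]
      exact Set.indicator_of_mem (hι k) _
    have hsum : (1:ℝ) ≤ ∑ k' : Fin n,
        (Ik m N ((k':ℕ)+1) ((idx j0 k' : ℕ)+1)).indicator (fun _ => (1:ℝ)) (t (σ k)) := by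
      have hle := Finset.single_le_sum
        (f := fun (k' : Fin n) => (Ik m N ((k':ℕ)+1) ((idx j0 k' : ℕ)+1)).indicator
          (fun _ => (1:ℝ)) (t (σ k)))
        (fun i _ => Set.indicator_nonneg (fun _ _ => zero_le_one) _) (Finset.mem_univ k)
      exact (le_of_eq h1.symm).trans hle
    have hJ : (0:ℝ) ≤ (N:ℝ) *
        (Set.Ico (((j0:ℝ)-1)/N) ((j0:ℝ)/N)).indicator (fun _ => (1:ℝ)) (t (σ k)) :=
      mul_nonneg (Nat.cast_nonneg N) (Set.indicator_nonneg (fun _ _ => zero_le_one) _)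
    nlinarith [mul_le_mul_of_nonneg_left hsum (Nat.cast_nonneg (α := ℝ) N)]
  -- injectivity of σ
  have hσinj : Function.Injective σ := by
    intro k k' he
    have h1 := hσ k
    have h2 := hσ k'
    rw [he] at h1
    have hkk' : ((k:ℕ):ℝ) < ((k':ℕ):ℝ) + 1 := by
      have : ((k:ℕ):ℝ)/N < (((k':ℕ):ℝ)+1)/N := lt_of_le_of_lt h1.1 h2.2
      rw [div_lt_div_iff₀ hNr hNr] at this
      nlinarith
    have hk'k : ((k':ℕ):ℝ) < ((k:ℕ):ℝ) + 1 := by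
      have : ((k':ℕ):ℝ)/N < (((k:ℕ):ℝ)+1)/N := lt_of_le_of_lt h2.1 h1.2
      rw [div_lt_div_iff₀ hNr hNr] at this
      nlinarith
    have e1 : (k:ℕ) < (k':ℕ) + 1 := by exact_mod_cast hkk'
    have e2 : (k':ℕ) < (k:ℕ) + 1 := by exact_mod_cast hk'k
    exact Fin.ext (by omega)
  -- lower bound for the sum
  have hsumlb : (n:ℝ) * N ≤ ∑ j, |xfun n m N idx j0 (t j)| := by
    have h1 : ∑ k : Fin n, |xfun n m N idx j0 (t (σ k))| ≤ ∑ j, |xfun n m N idx j0 (t j)| := by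
      rw [← Finset.sum_image (g := σ) (f := fun j => |xfun n m N idx j0 (t j)|)
        (fun a _ b _ h => hσinj h)]
      exact Finset.sum_le_sum_of_subset_of_nonneg (Finset.subset_univ _)
        (fun i _ _ => abs_nonneg _)
    have h2 : (n:ℝ)*N ≤ ∑ k : Fin n, |xfun n m N idx j0 (t (σ k))| := by
      calc (n:ℝ)*N = ∑ _k : Fin n, (N:ℝ) := by
            rw [Finset.sum_const, Finset.card_univ, Fintype.card_fin, nsmul_eq_mul]
        _ ≤ _ := Finset.sum_le_sum (fun k _ => hNle k)
    linarith
  -- M is positive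
  have hM0 : 0 < M := (σ ⟨0, hn⟩).pos
  have hMr : (0:ℝ) < M := by exact_mod_cast hM0
  -- conclude
  have h3 : (n:ℝ) * N ≤ (M:ℝ) * (B * (1 + ε)) := by
    have h4 := mul_le_mul_of_nonneg_left hup hMr.le
    have h5 : (M:ℝ) * ((1/M : ℝ) * ∑ j, |xfun n m N idx j0 (t j)|)
        = ∑ j, |xfun n m N idx j0 (t j)| := by
      field_simp
    rw [h5] at h4
    calc (n:ℝ) * N ≤ ∑ j, |xfun n m N idx j0 (t j)| := hsumlb
      _ ≤ (M:ℝ) * (B * (1 + ε)) := h4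
  rw [div_le_iff₀ (by positivity : (0:ℝ) < (1+ε)*B)]
  nlinarith [h3]
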